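/- Let G_k be as above and let z_{k-1}* be the smallest positive solution of G_{k-1}(z) = 1. Then z_{k-1}* is a simple pole of the rational function G_k, with residue lim_{z→z_{k-1}*} (z - z_{k-1}*) G_k(z) = z_{k-1}* / (−G_{k-1}'(z_{k-1}*)), and G_{k-1}'(z_{k-1}*) ≥ k − 1 > 0. -/

import Mathlib

open Real Finset Filter

/-- The generating functions `G_k` of planted plane trees with decreasing
labels from `{1, ..., k}`, viewed as real functions: `G 1 z = z` and
`G k z = G (k-1) z + z / (1 - G (k-1) z)` for `k ≥ 2`.  (`G 0` is junk.) -/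
noncomputable def G : ℕ → ℝ → ℝ
  | 0, z => z
  | 1, z => z
  | (k + 2), z => G (k + 1) z + z / (1 - G (k + 1) z)

lemma G_one (z : ℝ) : G 1 z = z := rfl

lemma G_succ (m : ℕ) (hm : 1 ≤ m) (z : ℝ) :
    G (m + 1) z = G m z + z / (1 - G m z) := by
  match m, hm with
  | (i + 1), _ => rfl

lemma G_zero_arg (m : ℕ) : G m 0 = 0 := by
  induction m with
  | zero => rfl
  | succ i ih =>
    match i, ih with
    | 0, _ => rfl
    | j + 1, ih => rw [G_succ _ (by omega)]; simp [ih]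

lemma G_eq_one_mono {j m : ℕ} {w : ℝ} (hjm : j ≤ m) (h : G j w = 1) : G m w = 1 := by
  induction m with
  | zero => interval_cases j; exact h
  | succ i ih =>
    rcases Nat.lt_or_ge j (i + 1) with hl | hg
    · have hi : G i w = 1 := ih (by omega)
      match i, hi with
      | 0, hi => exact hi
      | t + 1, hi => rw [G_succ _ (by omega), hi]; simp
    · have : j = i + 1 := by omega
      subst this; exact h

lemma G_cont {m : ℕ} {b : ℝ}
    (h : ∀ j, 1 ≤ j → j < m → ∀ w ∈ Set.Icc (0:ℝ) b, G j w ≠ 1) :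
    ContinuousOn (G m) (Set.Icc 0 b) := by
  induction m with
  | zero => exact continuousOn_id
  | succ i ih =>
    match i, ih with
    | 0, _ => exact continuousOn_id
    | t + 1, ih =>
      have hi : ContinuousOn (G (t + 1)) (Set.Icc 0 b) :=
        ih (fun j h1 h2 => h j h1 (by omega))
      have hden : ∀ w ∈ Set.Icc (0:ℝ) b, 1 - G (t + 1) w ≠ 0 := fun w hw he =>
        h (t + 1) (by omega) (by omega) w hw (by linarith [sub_eq_zero.mp he])
      have hfun : G (t + 2) = fun z => G (t + 1) z + z / (1 - G (t + 1) z) := by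
        funext z; rfl
      rw [hfun]
      exact hi.add (continuousOn_id.div (continuousOn_const.sub hi) hden)

theorem stmt8 (k : ℕ) (hk : 2 ≤ k) (zk : ℝ)
    (hzk : IsLeast {z : ℝ | 0 < z ∧ G (k - 1) z = 1} zk) :
    -- `zk` is a pole of `G k` ...
    Tendsto (fun z => |G k z|) (nhdsWithin zk {zk}ᶜ) atTop ∧
    -- ... which is simple, with the indicated residue ...
    Tendsto (fun z => (z - zk) * G k z) (nhdsWithin zk {zk}ᶜ)
      (nhds (zk / (-(deriv (G (k - 1)) zk)))) ∧
    -- ... and the derivative appearing in the residue satisfies: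
    (k : ℝ) - 1 ≤ deriv (G (k - 1)) zk ∧ (0 : ℝ) < (k : ℝ) - 1 := by
  obtain ⟨n, hn1, rfl⟩ : ∃ n, 1 ≤ n ∧ k = n + 1 := ⟨k - 1, by omega, by omega⟩
  simp only [Nat.add_sub_cancel] at hzk ⊢
  obtain ⟨⟨hz0, hroot⟩, hmin⟩ := hzk
  -- no root of `G n · = 1` strictly below `zk`
  have hne : ∀ w, 0 < w → w < zk → G n w ≠ 1 := fun w hw hlt he =>
    absurd (hmin ⟨hw, he⟩) (not_le.mpr hlt)
  -- upper bound on `(0, zk)`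
  have hU : ∀ m, 1 ≤ m → m ≤ n → ∀ w, 0 < w → w < zk → G m w < 1 := by
    intro m hm1 hmn w hw hwzk
    have hneIcc : ∀ j, 1 ≤ j → j ≤ n → ∀ v ∈ Set.Icc (0:ℝ) w, G j v ≠ 1 := by
      rintro j hj1 hjn v ⟨hv0, hvw⟩ he
      rcases eq_or_lt_of_le hv0 with h0 | h0
      · rw [← h0, G_zero_arg] at he; norm_num at he
      · exact hne v h0 (lt_of_le_of_lt hvw hwzk) (G_eq_one_mono hjn he)
    have hcont : ContinuousOn (G m) (Set.Icc 0 w) :=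
      G_cont (fun j hj1 hjm => hneIcc j hj1 (by omega))
    by_contra hge; push_neg at hge
    have h1 : (1:ℝ) ∈ Set.Icc (G m 0) (G m w) := by
      rw [G_zero_arg]; exact ⟨zero_le_one, hge⟩
    obtain ⟨c, hc, hc1⟩ := intermediate_value_Icc (le_of_lt hw) hcont h1
    exact hneIcc m hm1 hmn c hc hc1
  -- lower bound on `(0, zk)`
  have hLo : ∀ m, 1 ≤ m → m ≤ n → ∀ w, 0 < w → w < zk → (m : ℝ) * w ≤ G m w := by
    intro m hm1
    induction m, hm1 using Nat.le_induction with
    | base => intro _ w hw _; rw [G_one]; push_cast; linarith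
    | succ m hm IH =>
      intro hmn w hw hwzk
      have hlow := IH (by omega) w hw hwzk
      have hup := hU m (by omega) (by omega) w hw hwzk
      have hmR : (1 : ℝ) ≤ (m : ℝ) := by exact_mod_cast hm
      have hGpos : 0 < G m w := lt_of_lt_of_le (by nlinarith) hlow
      have hden : 0 < 1 - G m w := by linarith
      have hstep : w ≤ w / (1 - G m w) := by
        rw [le_div_iff₀ hden]; nlinarith
      rw [G_succ m (by omega)]
      push_cast; nlinarith
  -- telescoped bound `G j w + (m - j) w ≤ G m w`
  have hQ : ∀ j m, 1 ≤ j → j ≤ m → m ≤ n → ∀ w, 0 < w → w < zk →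
      G j w + ((m : ℝ) - j) * w ≤ G m w := by
    intro j m hj1 hjm
    induction m, hjm using Nat.le_induction with
    | base => intro _ w hw _; simp
    | succ m hm IH =>
      intro hmn w hw hwzk
      have hprev := IH (by omega) w hw hwzk
      have hup := hU m (by omega) (by omega) w hw hwzk
      have hlow := hLo m (by omega) (by omega) w hw hwzk
      have hmR : (1 : ℝ) ≤ (m : ℝ) := by exact_mod_cast (by omega : 1 ≤ m)
      have hGpos : 0 < G m w := lt_of_lt_of_le (by nlinarith) hlow
      have hden : 0 < 1 - G m w := by linarith
      have hstep : w ≤ w / (1 - G m w) := by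
        rw [le_div_iff₀ hden]; nlinarith
      rw [G_succ m (by omega)]
      push_cast; nlinarith
  -- values at `zk` itself, for `j < n`
  have hV : ∀ j, 1 ≤ j → j < n → (j : ℝ) * zk ≤ G j zk ∧ G j zk < 1 := by
    intro j
    induction j using Nat.strong_induction_on with
    | _ j IH =>
      intro hj1 hjn
      have hcont : ContinuousOn (G j) (Set.Icc 0 zk) := by
        apply G_cont
        rintro i hi1 hij w ⟨hw0, hwzk⟩ he
        rcases eq_or_lt_of_le hw0 with h0 | h0
        · rw [← h0, G_zero_arg] at he; norm_num at he
        rcases eq_or_lt_of_le hwzk with h1 | h1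
        · rw [h1] at he
          exact absurd he (ne_of_lt (IH i hij hi1 (by omega)).2)
        · exact hne w h0 h1 (G_eq_one_mono (by omega) he)
      haveI hF : (nhdsWithin zk (Set.Ioo (0:ℝ) zk)).NeBot :=
        right_nhdsWithin_Ioo_neBot hz0
      have htend : Tendsto (G j) (nhdsWithin zk (Set.Ioo (0:ℝ) zk)) (nhds (G j zk)) :=
        (hcont zk (Set.right_mem_Icc.mpr (le_of_lt hz0))).mono Set.Ioo_subset_Icc_self
      constructor
      · refine le_of_tendsto_of_tendsto
          (((continuous_const.mul continuous_id).tendsto zk).mono_left nhdsWithin_le_nhds)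
          htend ?_
        filter_upwards [self_mem_nhdsWithin] with w hw
        exact hLo j hj1 (by omega) w hw.1 hw.2
      · have hle : G j zk ≤ 1 - ((n : ℝ) - j) * zk := by
          refine le_of_tendsto_of_tendsto htend
            (((continuous_const.sub (continuous_const.mul continuous_id)).tendsto zk).mono_left
              nhdsWithin_le_nhds) ?_
          filter_upwards [self_mem_nhdsWithin] with w hw
          have h1 := hQ j n hj1 (by omega) le_rfl w hw.1 hw.2
          have h2 := hU n hn1 le_rfl w hw.1 hw.2
          simp only [Pi.sub_apply, Pi.mul_apply, id_eq]
          linarith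
        have hcast : (j : ℝ) + 1 ≤ (n : ℝ) := by exact_mod_cast hjn
        nlinarith
  -- derivatives at `zk`
  have hD : ∀ j, 1 ≤ j → j ≤ n → ∃ d, HasDerivAt (G j) d zk ∧ (j : ℝ) ≤ d := by
    intro j hj1
    induction j, hj1 using Nat.le_induction with
    | base =>
      intro _
      refine ⟨1, ?_, by norm_num⟩
      have : G 1 = fun z : ℝ => z := funext fun z => rfl
      rw [this]; exact hasDerivAt_id zk
    | succ j hj IH =>
      intro hj1n
      obtain ⟨d, hd, hdj⟩ := IH (by omega)
      obtain ⟨hjlo, hjup⟩ := hV j hj (by omega)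
      have hjR : (1 : ℝ) ≤ (j : ℝ) := by exact_mod_cast hj
      have hg0 : 0 ≤ G j zk := le_trans (by nlinarith) hjlo
      have hden : 0 < 1 - G j zk := by linarith
      have h1 : HasDerivAt (fun z => 1 - G j z) (0 - d) zk := (hasDerivAt_const zk 1).sub hd
      have h2 : HasDerivAt (fun z => z / (1 - G j z))
          ((1 * (1 - G j zk) - zk * (0 - d)) / (1 - G j zk) ^ 2) zk :=
        (hasDerivAt_id zk).div h1 (ne_of_gt hden)
      have h3 := hd.add h2
      have hfun : G (j + 1) = fun z => G j z + z / (1 - G j z) :=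
        funext fun z => G_succ j hj z
      refine ⟨_, by rw [hfun]; exact h3, ?_⟩
      have hterm : 1 ≤ (1 * (1 - G j zk) - zk * (0 - d)) / (1 - G j zk) ^ 2 := by
        rw [le_div_iff₀ (by positivity)]
        nlinarith
      push_cast; linarith
  obtain ⟨d, hd, hdn⟩ := hD n hn1 le_rfl
  have hderiv : deriv (G n) zk = d := hd.deriv
  have hnR : (1 : ℝ) ≤ (n : ℝ) := by exact_mod_cast hn1
  have hdpos : 0 < d := by linarith
  -- the slope limits
  have hslope := hasDerivAt_iff_tendsto_slope.mp hd
  have h1 : Tendsto (fun z => (1 - G n z) / (z - zk)) (nhdsWithin zk {zk}ᶜ) (nhds (-d)) := by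
    refine hslope.neg.congr fun z => ?_
    rw [slope_def_field, hroot, ← neg_div, neg_sub]
  have h2 : Tendsto (fun z => (z - zk) / (1 - G n z)) (nhdsWithin zk {zk}ᶜ)
      (nhds (-d)⁻¹) := by
    refine (h1.inv₀ (neg_ne_zero.mpr (ne_of_gt hdpos))).congr fun z => ?_
    rw [inv_div]
  have hid : Tendsto (fun z : ℝ => z) (nhdsWithin zk {zk}ᶜ) (nhds zk) :=
    tendsto_id.mono_left nhdsWithin_le_nhds
  have hsub : Tendsto (fun z : ℝ => z - zk) (nhdsWithin zk {zk}ᶜ) (nhds 0) := by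
    have := hid.sub_const zk
    simpa using this
  have hGn : Tendsto (G n) (nhdsWithin zk {zk}ᶜ) (nhds 1) := by
    have := hd.continuousAt.tendsto.mono_left (nhdsWithin_le_nhds (s := {zk}ᶜ))
    rwa [hroot] at this
  have hmain : Tendsto (fun z => (z - zk) * G (n + 1) z) (nhdsWithin zk {zk}ᶜ)
      (nhds (zk / (-d))) := by
    have hA : Tendsto (fun z => (z - zk) * G n z) (nhdsWithin zk {zk}ᶜ) (nhds 0) := by
      simpa using hsub.mul hGn
    have hB : Tendsto (fun z => z * ((z - zk) / (1 - G n z))) (nhdsWithin zk {zk}ᶜ)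
        (nhds (zk * (-d)⁻¹)) := hid.mul h2
    have hC := hA.add hB
    rw [zero_add, ← div_eq_mul_inv] at hC
    refine hC.congr fun z => ?_
    rw [G_succ n hn1]
    ring
  refine ⟨?_, ?_, ?_⟩
  · -- pole
    have habs : Tendsto (fun z => |(z - zk) * G (n + 1) z|) (nhdsWithin zk {zk}ᶜ)
        (nhds |zk / (-d)|) := hmain.abs
    have hpos : 0 < |zk / (-d)| :=
      abs_pos.mpr (div_ne_zero (ne_of_gt hz0) (neg_ne_zero.mpr (ne_of_gt hdpos)))
    have hinv : Tendsto (fun z => |z - zk|⁻¹) (nhdsWithin zk {zk}ᶜ) atTop := by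
      apply tendsto_inv_nhdsGT_zero.comp
      rw [tendsto_nhdsWithin_iff]
      constructor
      · simpa using hsub.abs
      · filter_upwards [self_mem_nhdsWithin] with z hz
        exact abs_pos.mpr (sub_ne_zero.mpr hz)
    have hprod := habs.pos_mul_atTop hpos hinv
    refine hprod.congr' ?_
    filter_upwards [self_mem_nhdsWithin] with z hz
    have hzne : |z - zk| ≠ 0 := abs_ne_zero.mpr (sub_ne_zero.mpr hz)
    rw [abs_mul, mul_comm (|z - zk|) _, mul_assoc, mul_inv_cancel₀ hzne, mul_one]
  · -- residue
    rw [hderiv]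
    exact hmain
  · -- derivative bound
    rw [hderiv]
    constructor
    · push_cast; linarith
    · push_cast; linarith
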